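/- Any two entire functions on ℂ² that coincide on the Heisenberg fan Σ ⊂ ℝ² ⊂ ℂ² are equal everywhere on ℂ². -/

import Mathlib

/-- Membership in the Heisenberg fan
`Σ = {(|λ|(2j+n), λ) : λ ≠ 0, j ∈ ℕ} ∪ {(ξ,0) : ξ ≥ 0} ⊂ ℝ²`. -/
def inHeisenbergFan (n : ℕ) (ξ lam : ℝ) : Prop :=
  (lam ≠ 0 ∧ ∃ j : ℕ, ξ = |lam| * (2 * j + n)) ∨ (lam = 0 ∧ 0 ≤ ξ)

/-- Identity theorem for an entire function vanishing along a sequence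
accumulating at a point. -/
lemma entire_zero_of_seq (f : ℂ → ℂ) (hf : Differentiable ℂ f)
    (u : ℕ → ℂ) (z₀ : ℂ) (hu : Filter.Tendsto u Filter.atTop (nhds z₀))
    (hne : ∀ j, u j ≠ z₀) (hz : ∀ j, f (u j) = 0) : ∀ z, f z = 0 := by
  have han : AnalyticOnNhd ℂ f Set.univ := hf.differentiableOn.analyticOnNhd isOpen_univ
  have hu' : Filter.Tendsto u Filter.atTop (nhdsWithin z₀ {z₀}ᶜ) :=
    tendsto_nhdsWithin_of_tendsto_nhds_of_eventually_within u hu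
      (Filter.Eventually.of_forall fun j => hne j)
  have hfreq : ∃ᶠ z in nhdsWithin z₀ {z₀}ᶜ, f z = 0 :=
    hu'.frequently (Filter.Frequently.of_forall hz)
  intro z
  exact han.eqOn_zero_of_preconnected_of_frequently_eq_zero isPreconnected_univ
    (Set.mem_univ z₀) hfreq (Set.mem_univ z)

/-- Any two entire functions on ℂ² that coincide on the Heisenberg fan
`Σ ⊂ ℝ² ⊂ ℂ²` are equal everywhere. -/
theorem entire_eq_of_eq_on_fan (n : ℕ) (hn : 1 ≤ n) (F G : ℂ × ℂ → ℂ)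
    (hF : Differentiable ℂ F) (hG : Differentiable ℂ G)
    (hfan : ∀ ξ lam : ℝ, inHeisenbergFan n ξ lam → F ((ξ : ℂ), (lam : ℂ)) = G ((ξ : ℂ), (lam : ℂ))) :
    F = G := by
  -- Step 1: for real ξ > 0, F(ξ, z) = G(ξ, z) for all z ∈ ℂ.
  have key1 : ∀ ξ : ℝ, 0 < ξ → ∀ z : ℂ, F ((ξ : ℂ), z) = G ((ξ : ℂ), z) := by
    intro ξ hξ z
    have hd : Differentiable ℂ (fun w : ℂ => F ((ξ : ℂ), w) - G ((ξ : ℂ), w)) := by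
      have h1 : Differentiable ℂ (fun w : ℂ => ((ξ : ℂ), w)) :=
        (differentiable_const _).prodMk differentiable_id
      exact (hF.comp h1).sub (hG.comp h1)
    -- the real sequence λ_j = ξ / (2j + n)
    set v : ℕ → ℝ := fun j => ξ / (2 * j + n) with hv
    have hden : ∀ j : ℕ, (0 : ℝ) < 2 * j + n := by
      intro j
      have : (1 : ℝ) ≤ (n : ℝ) := by exact_mod_cast hn
      positivity
    have hvpos : ∀ j, 0 < v j := fun j => div_pos hξ (hden j)
    have hvz : ∀ j, F ((ξ : ℂ), ((v j : ℝ) : ℂ)) - G ((ξ : ℂ), ((v j : ℝ) : ℂ)) = 0 := by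
      intro j
      rw [sub_eq_zero]
      apply hfan
      left
      refine ⟨(hvpos j).ne', j, ?_⟩
      rw [abs_of_pos (hvpos j), hv]
      field_simp
    have hvt : Filter.Tendsto (fun j : ℕ => ((v j : ℝ) : ℂ)) Filter.atTop (nhds 0) := by
      have ht : Filter.Tendsto v Filter.atTop (nhds 0) := by
        apply Filter.Tendsto.div_atTop (tendsto_const_nhds)
        have : Filter.Tendsto (fun j : ℕ => 2 * (j : ℝ)) Filter.atTop Filter.atTop :=
          (tendsto_natCast_atTop_atTop (R := ℝ)).const_mul_atTop two_pos
        exact Filter.tendsto_atTop_add_const_right _ (n : ℝ) this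
      have := (Complex.continuous_ofReal.tendsto 0).comp ht
      simpa [Function.comp_def] using this
    have := entire_zero_of_seq _ hd (fun j => ((v j : ℝ) : ℂ)) 0 hvt
      (fun j => by simpa using (hvpos j).ne') hvz z
    exact sub_eq_zero.mp this
  -- Step 2: for any z, the function w ↦ F(w,z) - G(w,z) vanishes on (0,∞) ⊂ ℝ.
  funext p
  obtain ⟨w, z⟩ := p
  have hd : Differentiable ℂ (fun w : ℂ => F (w, z) - G (w, z)) := by
    have h1 : Differentiable ℂ (fun w : ℂ => (w, z)) :=
      differentiable_id.prodMk (differentiable_const _)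
    exact (hF.comp h1).sub (hG.comp h1)
  set u : ℕ → ℝ := fun j => 1 + 1 / (j + 1) with hu
  have hupos : ∀ j, (0 : ℝ) < u j := by intro j; rw [hu]; positivity
  have huz : ∀ j, F (((u j : ℝ) : ℂ), z) - G (((u j : ℝ) : ℂ), z) = 0 := fun j =>
    sub_eq_zero.mpr (key1 (u j) (hupos j) z)
  have hune : ∀ j, ((u j : ℝ) : ℂ) ≠ 1 := by
    intro j
    have : u j ≠ 1 := by
      rw [hu]
      have : (0 : ℝ) < 1 / (j + 1) := by positivity
      intro h; simp at h; linarith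
    exact_mod_cast this
  have hut : Filter.Tendsto (fun j : ℕ => ((u j : ℝ) : ℂ)) Filter.atTop (nhds 1) := by
    have ht : Filter.Tendsto u Filter.atTop (nhds 1) := by
      have h1 : Filter.Tendsto (fun j : ℕ => 1 / ((j : ℝ) + 1)) Filter.atTop (nhds 0) :=
        tendsto_one_div_add_atTop_nhds_zero_nat
      have h2 := (tendsto_const_nhds (x := (1:ℝ)) (f := Filter.atTop (α := ℕ))).add h1
      rw [hu]
      simpa using h2
    have := (Complex.continuous_ofReal.tendsto 1).comp ht
    simpa [Function.comp_def] using this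
  have := entire_zero_of_seq _ hd (fun j => ((u j : ℝ) : ℂ)) 1 hut hune huz w
  exact sub_eq_zero.mp this
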